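/- Let A ⊆ B be finite sets of positive integers. Suppose M = (M₁, …, M_k) is any list of pairwise disjoint subsets of A whose union is A, such that (i) the blocks are increasing, i.e., for i < j every element of M_i is less than every element of M_j; (ii) if A = ∅, then k = #B + 1; and if A ≠ ∅ with elements a₁ < ⋯ < a_m, then the number of blocks strictly preceding the block containing a₁ equals #{b ∈ B : b < a₁}, for each consecutive pair a_i < a_{i+1} the difference of the indices of their blocks equals #{b ∈ B : a_i < b < a_{i+1}}, and the number of blocks strictly following the block containing a_m equals #{b ∈ B : b > a_m}. Then M equals the embedding partition EP_B(A). In particular, the embedding partition of A in B is the unique partition of A with these properties. -/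

import Mathlib

/-- The dividers: the elements of `B \ A` listed in increasing order,
    `d₁ < d₂ < ⋯ < d_s` (0-indexed here). -/
def EPdividers (A B : Finset ℕ) : List ℕ := (B \ A).sort (· ≤ ·)

/-- The embedding partition `EP_B(A)`: the list `(L₁, …, L_{s+1})` of subsets of `A`,
    where (0-indexed) `L_i = {a ∈ A : d_{i-1} < a < d_i}` with the conventions
    `d₀ = 0` and `d_{s+1} = ∞`. -/
def EP (A B : Finset ℕ) : List (Finset ℕ) :=
  (List.range ((EPdividers A B).length + 1)).map (fun i =>
    A.filter (fun a =>
      (if i = 0 then 0 else (EPdividers A B).getD (i - 1) 0) < a ∧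
      (i = (EPdividers A B).length ∨ a < (EPdividers A B).getD i 0)))

lemma mem_foldr_union (L : List (Finset ℕ)) (x : ℕ) :
    x ∈ L.foldr (· ∪ ·) ∅ ↔ ∃ t ∈ L, x ∈ t := by
  induction L with
  | nil => simp
  | cons h t ih => simp [ih]

/-- Uniqueness of the embedding partition: any list `M` of pairwise disjoint subsets of `A`
    with union `A`, whose blocks are increasing, and which satisfies the divider-counting
    properties (with respect to `B`) for the empty case, the minimum, consecutive pairs,
    and the maximum, must equal `EP_B(A)`. -/
theorem stmt_5 (A B : Finset ℕ) (hAB : A ⊆ B) (hpos : ∀ b ∈ B, 0 < b)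
    (M : List (Finset ℕ))
    (hdisj : List.Pairwise Disjoint M)
    (hunion : M.foldr (· ∪ ·) ∅ = A)
    (hinc : ∀ i j : ℕ, i < j → j < M.length →
      ∀ x ∈ M.getD i ∅, ∀ y ∈ M.getD j ∅, x < y)
    (hempty : A = ∅ → M.length = B.card + 1)
    (hmin : ∀ (hA : A.Nonempty), ∀ i < M.length, A.min' hA ∈ M.getD i ∅ →
      i = (B.filter (fun b => b < A.min' hA)).card)
    (hcons : ∀ a ∈ A, ∀ a' ∈ A, a < a' → (∀ x ∈ A, ¬(a < x ∧ x < a')) →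
      ∀ i < M.length, ∀ j < M.length, a ∈ M.getD i ∅ → a' ∈ M.getD j ∅ →
        j - i = (B.filter (fun b => a < b ∧ b < a')).card)
    (hmax : ∀ (hA : A.Nonempty), ∀ i < M.length, A.max' hA ∈ M.getD i ∅ →
      M.length - 1 - i = (B.filter (fun b => A.max' hA < b)).card) :
    M = EP A B := by
  classical
  set d : List ℕ := EPdividers A B with hd
  set s : ℕ := d.length with hs
  set f : ℕ → ℕ := fun j => d.getD j 0 with hf
  have hscard : s = (B \ A).card := by
    rw [hs, hd, EPdividers, Finset.length_sort]
  have hsort : d.Pairwise (· < ·) := (B \ A).sortedLT_sort.pairwise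
  have hmemf : ∀ j, j < s → f j ∈ B \ A := by
    intro j hj
    have h1 : f j = d[j] := d.getD_eq_getElem 0 hj
    rw [h1]
    exact (Finset.mem_sort _).mp (List.getElem_mem hj)
  have hmono : ∀ j k, j < k → k < s → f j < f k := by
    intro j k hjk hk
    show d.getD j 0 < d.getD k 0
    rw [d.getD_eq_getElem 0 (lt_trans hjk hk), d.getD_eq_getElem 0 hk]
    exact List.Pairwise.rel_get_of_lt hsort (a := ⟨j, lt_trans hjk hk⟩) (b := ⟨k, hk⟩) hjk
  have hsurjf : ∀ x ∈ B \ A, ∃ j, j < s ∧ f j = x := by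
    intro x hx
    have hxd : x ∈ d := (Finset.mem_sort _).mpr hx
    obtain ⟨j, hj, hje⟩ := List.mem_iff_getElem.mp hxd
    refine ⟨j, hj, ?_⟩
    show d.getD j 0 = x
    rw [d.getD_eq_getElem 0 hj]; exact hje
  set cnt : ℕ → ℕ := fun a => ((B \ A).filter (· < a)).card with hcnt
  -- basic membership facts about M
  have hmemM : ∀ x i, x ∈ M.getD i ∅ → i < M.length ∧ x ∈ A := by
    intro x i hx
    have hi : i < M.length := by
      by_contra h
      rw [M.getD_eq_default ∅ (le_of_not_gt h)] at hx
      exact absurd hx (Finset.notMem_empty x)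
    refine ⟨hi, ?_⟩
    rw [← hunion, mem_foldr_union]
    refine ⟨M.getD i ∅, ?_, hx⟩
    rw [M.getD_eq_getElem ∅ hi]
    exact List.getElem_mem hi
  have hAmem : ∀ a ∈ A, ∃ i, a ∈ M.getD i ∅ := by
    intro a ha
    rw [← hunion, mem_foldr_union] at ha
    obtain ⟨t, ht, hat⟩ := ha
    obtain ⟨i, hi, hie⟩ := List.mem_iff_getElem.mp ht
    exact ⟨i, by rw [M.getD_eq_getElem ∅ hi, hie]; exact hat⟩
  -- telescoping of cnt
  have htel : ∀ a' a : ℕ, a' ∈ A → a' < a →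
      cnt a = cnt a' + ((B \ A).filter (fun b => a' < b ∧ b < a)).card := by
    intro a' a ha' hlt
    show ((B \ A).filter (· < a)).card = _
    rw [← Finset.card_union_of_disjoint (by
      rw [Finset.disjoint_left]
      intro b hb1 hb2
      rw [Finset.mem_filter] at hb1 hb2
      omega)]
    congr 1
    ext b
    simp only [Finset.mem_union, Finset.mem_filter, Finset.mem_sdiff]
    constructor
    · rintro ⟨hb, hba⟩
      rcases Nat.lt_or_ge b a' with h1 | h1
      · exact Or.inl ⟨hb, h1⟩
      · refine Or.inr ⟨hb, lt_of_le_of_ne h1 ?_, hba⟩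
        intro he
        exact hb.2 (he ▸ ha')
    · rintro (⟨hb, h⟩ | ⟨hb, h1, h2⟩)
      · exact ⟨hb, lt_trans h hlt⟩
      · exact ⟨hb, h2⟩
  -- each element's block index equals cnt
  have hidx : ∀ a, a ∈ A → ∀ i, a ∈ M.getD i ∅ → i = cnt a := by
    intro a
    induction a using Nat.strong_induction_on with
    | _ a IH =>
      intro ha i hai
      by_cases hex : ∃ x ∈ A, x < a
      · obtain ⟨x, hx, hxa⟩ := hex
        have hne : (A.filter (· < a)).Nonempty :=
          ⟨x, Finset.mem_filter.mpr ⟨hx, hxa⟩⟩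
        set a' := (A.filter (· < a)).max' hne with ha'
        have ha'mem := (A.filter (· < a)).max'_mem hne
        rw [Finset.mem_filter] at ha'mem
        obtain ⟨ha'A, ha'lt⟩ := ha'mem
        have hno : ∀ y ∈ A, ¬ (a' < y ∧ y < a) := by
          rintro y hy ⟨h1, h2⟩
          have hy' : y ≤ a' := Finset.le_max' (A.filter (· < a)) y (Finset.mem_filter.mpr ⟨hy, h2⟩)
          omega
        obtain ⟨i', hi'⟩ := hAmem a' ha'A
        have hIH : i' = cnt a' := IH a' ha'lt ha'A i' hi'
        have hiM : i < M.length := (hmemM a i hai).1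
        have hi'M : i' < M.length := (hmemM a' i' hi').1
        have hle : i' ≤ i := by
          by_contra h
          have := hinc i i' (by omega) hi'M a hai a' hi'
          omega
        have hc := hcons a' ha'A a ha ha'lt hno i' hi'M i hiM hi' hai
        have heq : B.filter (fun b => a' < b ∧ b < a)
            = (B \ A).filter (fun b => a' < b ∧ b < a) := by
          ext b
          simp only [Finset.mem_filter, Finset.mem_sdiff]
          constructor
          · rintro ⟨hb, h⟩
            exact ⟨⟨hb, fun hbA => hno b hbA h⟩, h⟩
          · rintro ⟨⟨hb, _⟩, h⟩
            exact ⟨hb, h⟩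
        rw [heq] at hc
        have htl := htel a' a ha'A ha'lt
        omega
      · push_neg at hex
        have hA : A.Nonempty := ⟨a, ha⟩
        have hmin_eq : A.min' hA = a :=
          le_antisymm (A.min'_le a ha) (hex _ (A.min'_mem hA))
        have hiM := (hmemM a i hai).1
        have h1 := hmin hA i hiM (by rw [hmin_eq]; exact hai)
        rw [hmin_eq] at h1
        have heq : B.filter (fun b => b < a) = (B \ A).filter (fun b => b < a) := by
          ext b
          simp only [Finset.mem_filter, Finset.mem_sdiff]
          constructor
          · rintro ⟨hb, h⟩
            exact ⟨⟨hb, fun hbA => absurd h (not_lt.mpr (hex b hbA))⟩, h⟩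
          · rintro ⟨⟨hb, _⟩, h⟩
            exact ⟨hb, h⟩
        rw [heq] at h1
        exact h1
  -- length of M
  have hlen : M.length = s + 1 := by
    rcases Finset.eq_empty_or_nonempty A with hAe | hA
    · have h1 := hempty hAe
      have h2 : s = B.card := by
        rw [hscard, hAe, Finset.sdiff_empty]
      omega
    · set m := A.max' hA with hm
      have hmA : m ∈ A := A.max'_mem hA
      obtain ⟨i, hi⟩ := hAmem m hmA
      have hiM := (hmemM m i hi).1
      have h1 := hmax hA i hiM hi
      rw [← hm] at h1
      have hnox : ∀ x ∈ A, ¬ (m < x) := fun x hx h =>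
        absurd (A.le_max' x hx) (not_le.mpr h)
      have e1 : B.filter (fun b => m < b) = (B \ A).filter (fun b => m < b) := by
        ext b
        simp only [Finset.mem_filter, Finset.mem_sdiff]
        constructor
        · rintro ⟨hb, h⟩
          exact ⟨⟨hb, fun hbA => hnox b hbA h⟩, h⟩
        · rintro ⟨⟨hb, _⟩, h⟩
          exact ⟨hb, h⟩
      rw [e1] at h1
      have h2 : i = cnt m := hidx m hmA i hi
      have h3 : cnt m + ((B \ A).filter (fun b => m < b)).card = s := by
        show ((B \ A).filter (· < m)).card + _ = s
        rw [← Finset.card_union_of_disjoint (by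
          rw [Finset.disjoint_left]
          intro b hb1 hb2
          rw [Finset.mem_filter] at hb1 hb2
          omega)]
        rw [hscard]
        congr 1
        ext b
        simp only [Finset.mem_union, Finset.mem_filter, Finset.mem_sdiff]
        constructor
        · rintro (⟨hb, _⟩ | ⟨hb, _⟩) <;> exact hb
        · intro hb
          have hbm : b ≠ m := fun he => hb.2 (he ▸ hmA)
          rcases Nat.lt_or_ge b m with h | h
          · exact Or.inl ⟨hb, h⟩
          · exact Or.inr ⟨hb, lt_of_le_of_ne h (Ne.symm hbm)⟩
      omega
  -- counting via the sorted dividers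
  have hTcard : ∀ a : ℕ, cnt a = ((Finset.range s).filter (fun j => f j < a)).card := by
    intro a
    show ((B \ A).filter (· < a)).card = _
    have himg : (B \ A).filter (· < a) = ((Finset.range s).filter (fun j => f j < a)).image f := by
      ext x
      simp only [Finset.mem_filter, Finset.mem_image, Finset.mem_range, Finset.mem_sdiff]
      constructor
      · rintro ⟨hx, hxa⟩
        obtain ⟨j, hj, hje⟩ := hsurjf x (Finset.mem_sdiff.mpr hx)
        exact ⟨j, ⟨hj, by rw [hje]; exact hxa⟩, hje⟩
      · rintro ⟨j, ⟨hj, hja⟩, hje⟩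
        subst hje
        exact ⟨Finset.mem_sdiff.mp (hmemf j hj), hja⟩
    rw [himg, Finset.card_image_of_injOn]
    intro x hx y hy hxy
    simp only [Finset.coe_filter, Set.mem_setOf_eq, Finset.mem_range] at hx hy
    by_contra hnexy
    rcases Nat.lt_or_ge x y with h | h
    · exact absurd hxy (ne_of_lt (hmono x y h hy.1))
    · exact absurd hxy.symm (ne_of_lt (hmono y x (by omega) hx.1))
  have hcnt_le : ∀ a : ℕ, cnt a ≤ s := by
    intro a
    rw [hTcard a]
    calc ((Finset.range s).filter (fun j => f j < a)).card
        ≤ (Finset.range s).card := Finset.card_filter_le _ _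
      _ = s := Finset.card_range s
  have hcond1 : ∀ a ∈ A, (cnt a ≠ 0 → f (cnt a - 1) < a) ∧ (cnt a ≠ s → a < f (cnt a)) := by
    intro a ha
    set T := (Finset.range s).filter (fun j => f j < a) with hT
    have hTc : cnt a = T.card := hTcard a
    have hTlow : ∀ m ∈ T, ∀ j ≤ m, j ∈ T := by
      intro m hm j hj
      rw [hT, Finset.mem_filter, Finset.mem_range] at hm ⊢
      rcases Nat.lt_or_eq_of_le hj with h | h
      · exact ⟨lt_trans h hm.1, lt_trans (hmono j m h hm.1) hm.2⟩
      · rw [h]; exact hm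
    have haBA : a ∉ B \ A := fun h => (Finset.mem_sdiff.mp h).2 ha
    constructor
    · intro h0
      have hTne : T.Nonempty := Finset.card_pos.mp (by omega)
      set m := T.max' hTne with hmdef
      have hmT := T.max'_mem hTne
      have hTeq : T = Finset.range (m + 1) := by
        ext j
        rw [Finset.mem_range]
        constructor
        · intro hj; exact Nat.lt_succ_of_le (T.le_max' j hj)
        · intro hj; exact hTlow m hmT j (by omega)
      have hcm : cnt a = m + 1 := by rw [hTc, hTeq, Finset.card_range]
      have hmT' : m ∈ T := hmT
      rw [hT, Finset.mem_filter] at hmT'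
      rw [hcm]
      simpa using hmT'.2
    · intro hns
      have hcs : cnt a < s := lt_of_le_of_ne (hcnt_le a) hns
      have hfa : f (cnt a) ∈ B \ A := hmemf _ hcs
      have hne : a ≠ f (cnt a) := fun he => haBA (he ▸ hfa)
      rcases Nat.lt_or_ge a (f (cnt a)) with h | h
      · exact h
      · exfalso
        have hin : cnt a ∈ T :=
          Finset.mem_filter.mpr ⟨Finset.mem_range.mpr hcs, lt_of_le_of_ne h (Ne.symm hne)⟩
        have hsub : Finset.range (cnt a + 1) ⊆ T := fun j hj =>
          hTlow _ hin j (Nat.lt_succ_iff.mp (Finset.mem_range.mp hj))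
        have hcard := Finset.card_le_card hsub
        rw [Finset.card_range] at hcard
        omega
  have hcond2 : ∀ a ∈ A, ∀ i, i ≤ s → (i = 0 ∨ f (i - 1) < a) → (i = s ∨ a < f i) →
      cnt a = i := by
    intro a ha i his hlow hup
    have himg : (B \ A).filter (· < a) = (Finset.range i).image f := by
      ext x
      simp only [Finset.mem_filter, Finset.mem_sdiff, Finset.mem_image, Finset.mem_range]
      constructor
      · rintro ⟨hx, hxa⟩
        obtain ⟨j, hj, hje⟩ := hsurjf x (Finset.mem_sdiff.mpr hx)
        refine ⟨j, ?_, hje⟩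
        by_contra h
        push_neg at h
        rcases hup with rfl | hup
        · omega
        · have hle : f i ≤ f j := by
            rcases Nat.lt_or_eq_of_le h with h' | h'
            · exact le_of_lt (hmono i j h' hj)
            · rw [h']
          omega
      · rintro ⟨j, hj, hje⟩
        subst hje
        have hjs : j < s := lt_of_lt_of_le hj his
        refine ⟨Finset.mem_sdiff.mp (hmemf j hjs), ?_⟩
        rcases hlow with rfl | hlow
        · omega
        · have h1 : i - 1 < s := by omega
          rcases Nat.lt_trichotomy j (i - 1) with h | h | h
          · exact lt_trans (hmono j (i - 1) h h1) hlow
          · rw [h]; exact hlow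
          · omega
    show ((B \ A).filter (· < a)).card = i
    rw [himg, Finset.card_image_of_injOn, Finset.card_range]
    intro x hx y hy hxy
    simp only [Finset.coe_range, Set.mem_Iio] at hx hy
    by_contra hnexy
    rcases Nat.lt_or_ge x y with h | h
    · exact absurd hxy (ne_of_lt (hmono x y h (lt_of_lt_of_le hy his)))
    · exact absurd hxy.symm (ne_of_lt (hmono y x (by omega) (lt_of_lt_of_le hx his)))
  -- assemble
  have hEPlen : (EP A B).length = s + 1 := by
    rw [EP, List.length_map, List.length_range, ← hd, ← hs]
  have hEP2 : EP A B = (List.range (s + 1)).map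
      (fun i => A.filter (fun a => (if i = 0 then 0 else f (i - 1)) < a ∧ (i = s ∨ a < f i))) := by
    rw [EP, ← hd, ← hs]
  rw [hEP2]
  apply List.ext_getElem (by rw [List.length_map, List.length_range]; omega)
  intro i h1 h2
  have hiM : i < M.length := h1
  have his : i ≤ s := by omega
  have hgetD : M.getD i ∅ = M[i] := M.getD_eq_getElem ∅ hiM
  rw [List.getElem_map, List.getElem_range]
  ext a
  simp only [Finset.mem_filter]
  constructor
  · intro haM
    have haM' : a ∈ M.getD i ∅ := by rw [hgetD]; exact haM
    have haA : a ∈ A := (hmemM a i haM').2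
    have hic : i = cnt a := hidx a haA i haM'
    obtain ⟨hc1, hc2⟩ := hcond1 a haA
    refine ⟨haA, ?_, ?_⟩
    · by_cases h0 : i = 0
      · rw [if_pos h0]
        exact hpos a (hAB haA)
      · rw [if_neg h0]
        have := hc1 (by omega)
        rw [← hic] at this
        exact this
    · by_cases hss : i = s
      · exact Or.inl hss
      · refine Or.inr ?_
        have := hc2 (by omega)
        rw [← hic] at this
        exact this
  · rintro ⟨haA, hlo, hup⟩
    have hlow' : i = 0 ∨ f (i - 1) < a := by
      by_cases h0 : i = 0
      · exact Or.inl h0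
      · rw [if_neg h0] at hlo
        exact Or.inr hlo
    have hca : cnt a = i := hcond2 a haA i his hlow' hup
    obtain ⟨j, hj⟩ := hAmem a haA
    have hji : j = i := by rw [hidx a haA j hj, hca]
    rw [hji, hgetD] at hj
    exact hj
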